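/- (Adjointness of the EAKF and ETKF transformations.) Let E ∈ ℝ^{d×M}, let S ∈ ℝ^{d×d} be symmetric positive semidefinite and a ≥ 0. Then ( ∫₀^∞ t^{−1/2} e^{−t} exp(−t a (E Eᵀ S)) dt ) · E = √π · E · ((Id_M + a Eᵀ S E)⁻¹)^{1/2}, where the right-hand square root is the positive semidefinite square root of the inverse of the positive definite matrix Id_M + a Eᵀ S E. -/

import Mathlib

open Matrix MeasureTheory
open scoped Matrix.Norms.L2Operator NNReal RealInnerProductSpace

open scoped ComplexOrder in
/-- The square root of a positive semidefinite matrix (as defined in Mathlib, December 2024). -/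
noncomputable def Matrix.PosSemidef.sqrt {n 𝕜 : Type*} [Fintype n] [DecidableEq n] [RCLike 𝕜]
    {A : Matrix n n 𝕜} (hA : A.PosSemidef) : Matrix n n 𝕜 :=
  hA.1.eigenvectorUnitary.1 * diagonal ((↑) ∘ (√·) ∘ hA.1.eigenvalues) *
    (star hA.1.eigenvectorUnitary : Matrix n n 𝕜)

/-- The ensemble mean `x̄ = (1/M) ∑ᵢ X⁽ⁱ⁾`. -/
noncomputable def ensMean {d M : ℕ} (X : Fin M → EuclideanSpace ℝ (Fin d)) :
    EuclideanSpace ℝ (Fin d) :=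
  (M : ℝ)⁻¹ • ∑ i, X i

/-- The matrix of ensemble deviations, with columns `X⁽ⁱ⁾ − x̄`. -/
noncomputable def devMat {d M : ℕ} (X : Fin M → EuclideanSpace ℝ (Fin d)) :
    Matrix (Fin d) (Fin M) ℝ :=
  Matrix.of fun j i => (X i - ensMean X) j

/-- The trace of the empirical covariance matrix,
`tr(P) = (1/(M−1)) ∑ᵢ ‖X⁽ⁱ⁾ − x̄‖²`. -/
noncomputable def trP {d M : ℕ} (X : Fin M → EuclideanSpace ℝ (Fin d)) : ℝ :=
  ((M : ℝ) - 1)⁻¹ * ∑ i, ‖X i - ensMean X‖ ^ 2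

set_option linter.unusedSectionVars false


section EakfAux

open NormedSpace Nat

variable {p q : Type*} [Fintype p] [Fintype q] [DecidableEq p] [DecidableEq q]

/-- Right multiplication by a fixed matrix, as a continuous linear map. -/
noncomputable def eakfMulRight (Y : Matrix p q ℝ) : Matrix p p ℝ →L[ℝ] Matrix p q ℝ :=
  LinearMap.toContinuousLinearMap
    { toFun := fun C => C * Y
      map_add' := fun A B => Matrix.add_mul A B Y
      map_smul' := fun c C => Matrix.smul_mul c C Y }

/-- Left multiplication by a fixed matrix, as a continuous linear map. -/
noncomputable def eakfMulLeft (Y : Matrix p q ℝ) : Matrix q q ℝ →L[ℝ] Matrix p q ℝ :=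
  LinearMap.toContinuousLinearMap
    { toFun := fun C => Y * C
      map_add' := fun A B => Matrix.mul_add Y A B
      map_smul' := fun c C => Matrix.mul_smul Y c C }

@[simp] lemma eakfMulRight_apply (Y : Matrix p q ℝ) (C : Matrix p p ℝ) :
    eakfMulRight Y C = C * Y := rfl

@[simp] lemma eakfMulLeft_apply (Y : Matrix p q ℝ) (C : Matrix q q ℝ) :
    eakfMulLeft Y C = Y * C := rfl

lemma eakf_exp_mul_of_mul_eq (A : Matrix p p ℝ) (B : Matrix q q ℝ) (Y : Matrix p q ℝ)
    (h : A * Y = Y * B) :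
    NormedSpace.exp A * Y = Y * NormedSpace.exp B := by
  have hn : ∀ n : ℕ, A ^ n * Y = Y * B ^ n := by
    intro n
    induction n with
    | zero => simp
    | succ n ih => rw [pow_succ, pow_succ, Matrix.mul_assoc (A ^ n) A Y, h, ← Matrix.mul_assoc, ih, Matrix.mul_assoc]
  have hA := NormedSpace.expSeries_summable' (𝕂 := ℝ) A
  have hB := NormedSpace.expSeries_summable' (𝕂 := ℝ) B
  calc NormedSpace.exp A * Y = eakfMulRight Y (NormedSpace.exp A) := rfl
    _ = ∑' n : ℕ, eakfMulRight Y ((n !⁻¹ : ℝ) • A ^ n) := by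
        rw [exp_eq_tsum ℝ]
        exact (eakfMulRight Y).map_tsum hA
    _ = ∑' n : ℕ, eakfMulLeft Y ((n !⁻¹ : ℝ) • B ^ n) := by
        refine tsum_congr fun n => ?_
        simp [hn n]
    _ = eakfMulLeft Y (NormedSpace.exp B) := by
        rw [exp_eq_tsum ℝ]
        exact ((eakfMulLeft Y).map_tsum hB).symm
    _ = Y * NormedSpace.exp B := rfl

lemma eakf_diagonal_eq_sum (v : p → ℝ) :
    Matrix.diagonal v = ∑ i, v i • Matrix.single i i (1 : ℝ) := by
  ext j k
  rw [Matrix.sum_apply]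
  by_cases h : j = k
  · subst h
    rw [Matrix.diagonal_apply_eq]
    rw [Finset.sum_eq_single j]
    · simp [Matrix.single]
    · intro i _ hij
      simp only [Matrix.smul_apply, Matrix.single, Matrix.of_apply, smul_eq_mul]
      rw [if_neg (by rintro ⟨rfl, -⟩; exact hij rfl), mul_zero]
    · simp
  · rw [Matrix.diagonal_apply_ne _ h]
    symm
    apply Finset.sum_eq_zero
    intro i _
    simp only [Matrix.smul_apply, Matrix.single, Matrix.of_apply, smul_eq_mul]
    rw [if_neg (by rintro ⟨rfl, rfl⟩; exact h rfl), mul_zero]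

/-- Conjugation of a diagonal matrix by (the unitary) `U`. -/
noncomputable def eakfConj (U : Matrix p p ℝ) (v : p → ℝ) : Matrix p p ℝ :=
  U * Matrix.diagonal v * star U

lemma eakf_conj_sum (U : Matrix p p ℝ) (v : p → ℝ) :
    eakfConj U v = ∑ i, v i • (U * Matrix.single i i (1 : ℝ) * star U) := by
  rw [eakfConj, eakf_diagonal_eq_sum, Matrix.mul_sum, Matrix.sum_mul]
  refine Finset.sum_congr rfl fun i _ => ?_
  rw [Matrix.mul_smul, Matrix.smul_mul]

lemma eakf_conj_mul (U : Matrix p p ℝ) (h2 : star U * U = 1) (v w : p → ℝ) :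
    eakfConj U v * eakfConj U w = eakfConj U (fun i => v i * w i) := by
  rw [eakfConj, eakfConj, eakfConj, Matrix.mul_assoc (U * Matrix.diagonal v) (star U) _,
    ← Matrix.mul_assoc (star U) (U * Matrix.diagonal w) (star U),
    ← Matrix.mul_assoc (star U) U (Matrix.diagonal w), h2, Matrix.one_mul,
    ← Matrix.mul_assoc (U * Matrix.diagonal v) (Matrix.diagonal w) (star U),
    Matrix.mul_assoc U (Matrix.diagonal v) (Matrix.diagonal w), Matrix.diagonal_mul_diagonal]

lemma eakf_conj_one (U : Matrix p p ℝ) (h1 : U * star U = 1) :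
    eakfConj U (fun _ => (1 : ℝ)) = 1 := by
  have : Matrix.diagonal (fun _ : p => (1:ℝ)) = 1 := Matrix.diagonal_one
  rw [eakfConj, this, Matrix.mul_one, h1]

lemma eakf_conj_exp (U : Matrix p p ℝ) (h1 : U * star U = 1) (v : p → ℝ) :
    NormedSpace.exp (eakfConj U v) = eakfConj U (fun i => Real.exp (v i)) := by
  have hU : IsUnit U := ⟨⟨U, star U, h1, mul_eq_one_comm.mp h1⟩, rfl⟩
  have hUinv : U⁻¹ = star U := Matrix.inv_eq_right_inv h1
  rw [eakfConj, eakfConj, ← hUinv, Matrix.exp_conj U (Matrix.diagonal v) hU,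
    Matrix.exp_diagonal]
  have hexp : NormedSpace.exp v = fun i => Real.exp (v i) := by
    funext i
    rw [Pi.coe_exp, ← Real.exp_eq_exp_ℝ]
  rw [hexp]

lemma eakf_conj_posSemidef (U : Matrix p p ℝ) {v : p → ℝ} (hv : ∀ i, 0 ≤ v i) :
    (eakfConj U v).PosSemidef := by
  have hd : (Matrix.diagonal v).PosSemidef := Matrix.posSemidef_diagonal_iff.mpr hv
  have := hd.mul_mul_conjTranspose_same U
  rwa [eakfConj, Matrix.star_eq_conjTranspose]

lemma eakf_integrable_one {r : ℝ} (hr : 1 ≤ r) :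
    IntegrableOn (fun t : ℝ => (Real.sqrt t)⁻¹ * Real.exp (-(r * t))) (Set.Ioi 0) := by
  have hg := Real.GammaIntegral_convergent (by norm_num : (0:ℝ) < 1/2)
  refine hg.mono' ?_ ?_
  · refine ContinuousOn.aestronglyMeasurable ?_ measurableSet_Ioi
    exact (Real.continuous_sqrt.continuousOn.inv₀
        (fun t ht => Real.sqrt_ne_zero'.mpr ht)).mul
      ((Real.continuous_exp.comp (continuous_const.mul continuous_id).neg).continuousOn)
  · rw [ae_restrict_iff' measurableSet_Ioi]
    filter_upwards with t ht
    have ht' : (0:ℝ) < t := ht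
    show ‖(Real.sqrt t)⁻¹ * Real.exp (-(r * t))‖ ≤ Real.exp (-t) * t ^ ((1:ℝ)/2 - 1)
    have h1 : ‖(Real.sqrt t)⁻¹ * Real.exp (-(r * t))‖
        = (Real.sqrt t)⁻¹ * Real.exp (-(r * t)) := by
      rw [Real.norm_eq_abs, abs_of_nonneg]
      positivity
    rw [h1]
    have h2 : Real.exp (-(r * t)) ≤ Real.exp (-t) := by
      apply Real.exp_le_exp.mpr
      nlinarith
    have h3 : (Real.sqrt t)⁻¹ = t ^ ((1:ℝ)/2 - 1) := by
      rw [show (1:ℝ)/2 - 1 = -(1/2) by norm_num, Real.rpow_neg ht'.le, ← Real.sqrt_eq_rpow]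
    calc (Real.sqrt t)⁻¹ * Real.exp (-(r * t)) ≤ (Real.sqrt t)⁻¹ * Real.exp (-t) := by
          apply mul_le_mul_of_nonneg_left h2; positivity
      _ = Real.exp (-t) * t ^ ((1:ℝ)/2 - 1) := by rw [h3]; ring

lemma eakf_integrable_sqrt :
    IntegrableOn (fun t : ℝ => Real.sqrt t * Real.exp (-t)) (Set.Ioi 0) := by
  have hg := Real.GammaIntegral_convergent (by norm_num : (0:ℝ) < 3/2)
  refine (hg.congr_fun ?_ measurableSet_Ioi)
  intro t ht
  have ht' : (0:ℝ) < t := ht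
  show Real.exp (-t) * t ^ ((3:ℝ)/2 - 1) = Real.sqrt t * Real.exp (-t)
  have h3 : t ^ ((3:ℝ)/2 - 1) = Real.sqrt t := by
    rw [show (3:ℝ)/2 - 1 = 1/2 by norm_num, ← Real.sqrt_eq_rpow]
  rw [h3, mul_comm]

lemma eakf_integral_value {r : ℝ} (hr : 0 < r) :
    ∫ t in Set.Ioi (0:ℝ), (Real.sqrt t)⁻¹ * Real.exp (-(r * t))
      = Real.sqrt Real.pi * (Real.sqrt r)⁻¹ := by
  have heq : Set.EqOn (fun t : ℝ => (Real.sqrt t)⁻¹ * Real.exp (-(r * t)))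
      (fun t : ℝ => t ^ ((1:ℝ)/2 - 1) * Real.exp (-(r * t))) (Set.Ioi 0) := by
    intro t ht
    have ht' : (0:ℝ) < t := ht
    have h3 : (Real.sqrt t)⁻¹ = t ^ ((1:ℝ)/2 - 1) := by
      rw [show (1:ℝ)/2 - 1 = -(1/2) by norm_num, Real.rpow_neg ht'.le, ← Real.sqrt_eq_rpow]
    simp only [h3]
  rw [setIntegral_congr_fun measurableSet_Ioi heq,
    Real.integral_rpow_mul_exp_neg_mul_Ioi (by norm_num : (0:ℝ) < 1/2) hr,
    Real.Gamma_one_half_eq, one_div, Real.inv_rpow hr.le, ← Real.sqrt_eq_rpow, mul_comm]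

end EakfAux

/-- adjointness of the EAKF and ETKF transformations:
`(∫₀^∞ t^{−1/2} e^{−t} exp(−t a (EEᵀS)) dt) E = √π · E ((Id + a EᵀSE)⁻¹)^{1/2}`. -/
theorem eakf_etkf_adjointness {d M : ℕ} (E : Matrix (Fin d) (Fin M) ℝ)
    (S : Matrix (Fin d) (Fin d) ℝ) (hS : S.PosSemidef) (a : ℝ) (ha : 0 ≤ a)
    (hB : ((((1 : Matrix (Fin M) (Fin M) ℝ) + a • (Eᵀ * S * E)))⁻¹).PosSemidef) :
    (∫ t in Set.Ioi (0 : ℝ),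
        ((Real.sqrt t)⁻¹ * Real.exp (-t)) • NormedSpace.exp (-((t * a) • (E * Eᵀ * S)))) * E =
      Real.sqrt Real.pi • (E * hB.sqrt) := by
  classical
  set X : Matrix (Fin d) (Fin d) ℝ := E * Eᵀ * S with hXdef
  set N : Matrix (Fin M) (Fin M) ℝ := Eᵀ * S * E with hNdef
  have hX' : X = E * (Eᵀ * S) := by rw [hXdef, Matrix.mul_assoc]
  have hN : N.PosSemidef := by
    have h := hS.conjTranspose_mul_mul_same (B := E)
    rw [hNdef]
    simpa [Matrix.conjTranspose_eq_transpose_of_trivial] using h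
  have hH : N.IsHermitian := hN.1
  set lam : Fin M → ℝ := hH.eigenvalues with hlamdef
  set V : Matrix (Fin M) (Fin M) ℝ := hH.eigenvectorUnitary.1 with hVdef
  have hV1 : V * star V = 1 := (Matrix.mem_unitaryGroup_iff).mp hH.eigenvectorUnitary.2
  have hV2 : star V * V = 1 := (Matrix.mem_unitaryGroup_iff').mp hH.eigenvectorUnitary.2
  have hlam_nonneg : ∀ i, 0 ≤ lam i := fun i => hN.eigenvalues_nonneg i
  -- spectral theorem
  have hspec : N = eakfConj V lam := by
    have h := hH.spectral_theorem
    rw [eakfConj, hVdef, hlamdef]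
    simpa [RCLike.ofReal_real_eq_id, Function.comp] using h
  -- algebra of conjugation
  have hconj_smul : ∀ (u : ℝ) (v : Fin M → ℝ),
      eakfConj V (fun i => u * v i) = u • eakfConj V v := by
    intro u v
    have hd : (fun i => u * v i) = u • v := by funext i; simp
    rw [eakfConj, eakfConj, hd, Matrix.diagonal_smul, Matrix.mul_smul, Matrix.smul_mul]
  have hconj_neg : ∀ v : Fin M → ℝ, eakfConj V (fun i => -(v i)) = -(eakfConj V v) := by
    intro v
    rw [eakfConj, eakfConj, ← Matrix.diagonal_neg, Matrix.mul_neg, Matrix.neg_mul]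
  have hID2 : ∀ u : ℝ, NormedSpace.exp (-(u • N))
      = eakfConj V (fun i => Real.exp (-(u * lam i))) := by
    intro u
    have h1 : -(u • N) = eakfConj V (fun i => -(u * lam i)) := by
      rw [hconj_neg, hconj_smul, ← hspec]
    rw [h1, eakf_conj_exp V hV1]
  -- intertwining
  have hXE : X * E = E * N := by rw [hXdef, hNdef]; simp only [Matrix.mul_assoc]
  have hNTS : N * (Eᵀ * S) = (Eᵀ * S) * X := by rw [hXdef, hNdef]; simp only [Matrix.mul_assoc]
  have hinter : ∀ u : ℝ,
      NormedSpace.exp (-(u • X)) * E = E * NormedSpace.exp (-(u • N)) := by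
    intro u
    refine eakf_exp_mul_of_mul_eq _ _ _ ?_
    rw [Matrix.neg_mul, Matrix.mul_neg, Matrix.smul_mul, Matrix.mul_smul, hXE]
  have hinter2 : ∀ u : ℝ,
      NormedSpace.exp (-(u • N)) * (Eᵀ * S) = (Eᵀ * S) * NormedSpace.exp (-(u • X)) := by
    intro u
    refine eakf_exp_mul_of_mul_eq _ _ _ ?_
    rw [Matrix.neg_mul, Matrix.mul_neg, Matrix.smul_mul, Matrix.mul_smul, hNTS]
  -- the auxiliary scalar family
  set w : ℝ → Fin M → ℝ :=
    fun u i => if lam i = 0 then -u else (Real.exp (-(u * lam i)) - 1) / lam i with hwdef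
  have hw_deriv : ∀ (i : Fin M) (u : ℝ),
      HasDerivAt (fun u => w u i) (-(Real.exp (-(u * lam i)))) u := by
    intro i u
    by_cases h : lam i = 0
    · simp only [hwdef, if_pos h, h, mul_zero, neg_zero, Real.exp_zero]
      exact (hasDerivAt_id u).neg
    · simp only [hwdef, if_neg h]
      have h1 : HasDerivAt (fun u : ℝ => -(u * lam i)) (-(lam i)) u :=
        (hasDerivAt_mul_const (lam i)).neg
      have h2 : HasDerivAt (fun u : ℝ => Real.exp (-(u * lam i)))
          (Real.exp (-(u * lam i)) * -(lam i)) u := (Real.hasDerivAt_exp _).comp u h1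
      have h3 := (h2.sub_const 1).div_const (lam i)
      refine h3.congr_deriv ?_
      rw [mul_neg, neg_div, mul_div_assoc, div_self h, mul_one]
  have hw_zero : w 0 = 0 := by
    funext i
    simp only [hwdef]
    split <;> simp
  have hw_bound : ∀ (u : ℝ), 0 ≤ u → ∀ i, |w u i| ≤ u := by
    intro u hu i
    by_cases h : lam i = 0
    · simp only [hwdef, if_pos h, abs_neg, abs_of_nonneg hu, le_refl]
    · have hpos : 0 < lam i := lt_of_le_of_ne (hlam_nonneg i) (Ne.symm h)
      simp only [hwdef, if_neg h]
      rw [abs_div, abs_of_nonneg hpos.le, div_le_iff₀ hpos]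
      have he1 : Real.exp (-(u * lam i)) ≤ 1 :=
        Real.exp_le_one_iff.mpr (by nlinarith)
      have he2 : 1 - u * lam i ≤ Real.exp (-(u * lam i)) := by
        have := Real.add_one_le_exp (-(u * lam i)); linarith
      rw [abs_of_nonpos (by linarith)]
      linarith
  -- sums of conjugations
  have hKsum : ∀ v : Fin M → ℝ, E * eakfConj V v
      = ∑ i, v i • (E * (V * Matrix.single i i (1:ℝ) * star V)) := by
    intro v
    rw [eakf_conj_sum, Matrix.mul_sum]
    refine Finset.sum_congr rfl fun i _ => ?_
    rw [Matrix.mul_smul]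
  have hKsum2 : ∀ v : Fin M → ℝ, E * eakfConj V v * (Eᵀ * S)
      = ∑ i, v i • (E * (V * Matrix.single i i (1:ℝ) * star V) * (Eᵀ * S)) := by
    intro v
    rw [hKsum, Matrix.sum_mul]
    refine Finset.sum_congr rfl fun i _ => ?_
    rw [Matrix.smul_mul]
  -- the key closed form for `exp (-(u • X))`
  have hID : ∀ u : ℝ, NormedSpace.exp (-(u • X))
      = 1 + E * eakfConj V (w u) * (Eᵀ * S) := by
    have hFd : ∀ t : ℝ, HasDerivAt
        (fun s : ℝ => NormedSpace.exp (s • (-X)) - (1 + E * eakfConj V (w s) * (Eᵀ * S)))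
        0 t := by
      intro t
      have h1 : HasDerivAt (fun u : ℝ => NormedSpace.exp (u • (-X)))
          (NormedSpace.exp (t • (-X)) * (-X)) t := hasDerivAt_exp_smul_const (-X) t
      have e2a : NormedSpace.exp (-(t • X)) * X
          = NormedSpace.exp (-(t • X)) * E * (Eᵀ * S) := by
        rw [Matrix.mul_assoc, ← hX']
      have e2 : NormedSpace.exp (-(t • X)) * X
          = E * eakfConj V (fun i => Real.exp (-(t * lam i))) * (Eᵀ * S) := by
        rw [e2a, hinter t, hID2 t]
      have hval : NormedSpace.exp (t • (-X)) * (-X)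
          = ∑ i, (-(Real.exp (-(t * lam i)))) •
              (E * (V * Matrix.single i i (1:ℝ) * star V) * (Eᵀ * S)) := by
        rw [smul_neg, Matrix.mul_neg, e2, hKsum2]
        simp [neg_smul, ← Finset.sum_neg_distrib]
      have h2 : HasDerivAt
          (fun u : ℝ => 1 + E * eakfConj V (w u) * (Eᵀ * S))
          (∑ i, (-(Real.exp (-(t * lam i)))) •
              (E * (V * Matrix.single i i (1:ℝ) * star V) * (Eᵀ * S))) t := by
        have hfun : (fun u : ℝ => 1 + E * eakfConj V (w u) * (Eᵀ * S))
            = fun u : ℝ => 1 + ∑ i, w u i •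
                (E * (V * Matrix.single i i (1:ℝ) * star V) * (Eᵀ * S)) := by
          funext u; rw [hKsum2]
        rw [hfun]
        exact HasDerivAt.const_add _
          (HasDerivAt.fun_sum fun i _ => (hw_deriv i t).smul_const _)
      have h3 := h1.sub h2
      rwa [hval, sub_self] at h3
    have hconst := is_const_of_deriv_eq_zero
      (fun t => (hFd t).differentiableAt) (fun t => (hFd t).deriv)
    intro u
    have h0 : NormedSpace.exp ((0:ℝ) • (-X)) - (1 + E * eakfConj V (w 0) * (Eᵀ * S)) = 0 := by
      rw [hw_zero, zero_smul, NormedSpace.exp_zero]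
      have : eakfConj V (0 : Fin M → ℝ) = 0 := by
        rw [eakfConj, show Matrix.diagonal (0 : Fin M → ℝ) = 0 from Matrix.diagonal_zero,
          Matrix.mul_zero, Matrix.zero_mul]
      rw [this, Matrix.mul_zero, Matrix.zero_mul, add_zero, sub_self]
    have hu := hconst u 0
    rw [h0] at hu
    have := sub_eq_zero.mp hu
    rwa [smul_neg] at this
  -- continuity facts
  have hf_cont : ContinuousOn (fun t : ℝ => (Real.sqrt t)⁻¹ * Real.exp (-t)) (Set.Ioi (0:ℝ)) :=
    (Real.continuous_sqrt.continuousOn.inv₀ (fun t ht => Real.sqrt_ne_zero'.mpr ht)).mul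
      (Real.continuous_exp.comp continuous_neg).continuousOn
  have hf_int : IntegrableOn (fun t : ℝ => (Real.sqrt t)⁻¹ * Real.exp (-t)) (Set.Ioi 0) := by
    have h := eakf_integrable_one (le_refl (1:ℝ))
    simpa using h
  have hw_cont : ∀ i, Continuous (fun t : ℝ => w (t * a) i) := by
    intro i
    by_cases h : lam i = 0
    · simp only [hwdef, if_pos h]
      fun_prop
    · simp only [hwdef, if_neg h]
      fun_prop
  have hwint : ∀ i, IntegrableOn
      (fun t : ℝ => ((Real.sqrt t)⁻¹ * Real.exp (-t)) * w (t * a) i) (Set.Ioi 0) := by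
    intro i
    refine Integrable.mono' (eakf_integrable_sqrt.const_mul a) ?_ ?_
    · exact (hf_cont.mul (hw_cont i).continuousOn).aestronglyMeasurable measurableSet_Ioi
    · rw [ae_restrict_iff' measurableSet_Ioi]
      filter_upwards with t ht
      have ht' : (0:ℝ) < t := ht
      have hb := hw_bound (t * a) (by positivity) i
      have hfpos : 0 ≤ (Real.sqrt t)⁻¹ * Real.exp (-t) := by positivity
      show ‖((Real.sqrt t)⁻¹ * Real.exp (-t)) * w (t * a) i‖ ≤ a * (Real.sqrt t * Real.exp (-t))
      rw [Real.norm_eq_abs, abs_mul, abs_of_nonneg hfpos]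
      calc ((Real.sqrt t)⁻¹ * Real.exp (-t)) * |w (t * a) i|
          ≤ ((Real.sqrt t)⁻¹ * Real.exp (-t)) * (t * a) := mul_le_mul_of_nonneg_left hb hfpos
        _ = a * ((t / Real.sqrt t) * Real.exp (-t)) := by ring
        _ = a * (Real.sqrt t * Real.exp (-t)) := by rw [Real.div_sqrt]
  have hG_int : IntegrableOn
      (fun t => ((Real.sqrt t)⁻¹ * Real.exp (-t)) • NormedSpace.exp (-((t * a) • X)))
      (Set.Ioi 0) := by
    have hfun : (fun t => ((Real.sqrt t)⁻¹ * Real.exp (-t)) • NormedSpace.exp (-((t * a) • X)))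
        = fun t => ((Real.sqrt t)⁻¹ * Real.exp (-t)) • (1 : Matrix (Fin d) (Fin d) ℝ)
            + ∑ i, (((Real.sqrt t)⁻¹ * Real.exp (-t)) * w (t * a) i) •
                (E * (V * Matrix.single i i (1:ℝ) * star V) * (Eᵀ * S)) := by
      funext t
      rw [hID (t * a), hKsum2, smul_add, Finset.smul_sum]
      congr 1
      refine Finset.sum_congr rfl fun i _ => ?_
      rw [smul_smul]
    rw [hfun]
    exact (hf_int.smul_const _).add
      (integrable_finset_sum _ fun i _ => (hwint i).smul_const _)
  -- scalar integrals
  have hcomb : ∀ (i : Fin M),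
      (fun t : ℝ => ((Real.sqrt t)⁻¹ * Real.exp (-t)) * Real.exp (-(t * a * lam i)))
        = fun t : ℝ => (Real.sqrt t)⁻¹ * Real.exp (-((1 + a * lam i) * t)) := by
    intro i
    funext t
    rw [mul_assoc, ← Real.exp_add]
    congr 1
    ring
  have hb_pos : ∀ i, 0 < 1 + a * lam i := by
    intro i
    have := mul_nonneg ha (hlam_nonneg i)
    linarith
  have hs_int : ∀ i, IntegrableOn
      (fun t : ℝ => ((Real.sqrt t)⁻¹ * Real.exp (-t)) * Real.exp (-(t * a * lam i)))
      (Set.Ioi 0) := by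
    intro i
    rw [hcomb i]
    exact eakf_integrable_one (le_add_of_nonneg_right (mul_nonneg ha (hlam_nonneg i)))
  have hs_val : ∀ i, (∫ t in Set.Ioi (0:ℝ),
        ((Real.sqrt t)⁻¹ * Real.exp (-t)) * Real.exp (-(t * a * lam i)))
      = Real.sqrt Real.pi * (Real.sqrt (1 + a * lam i))⁻¹ := by
    intro i
    rw [hcomb i]
    exact eakf_integral_value (hb_pos i)
  -- identification of the square root
  have hplus : (1 : Matrix (Fin M) (Fin M) ℝ) + a • N = eakfConj V (fun i => 1 + a * lam i) := by
    have hd : Matrix.diagonal (fun i => 1 + a * lam i)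
        = Matrix.diagonal (fun _ : Fin M => (1:ℝ)) + Matrix.diagonal (fun i => a * lam i) := by
      rw [Matrix.diagonal_add]
    have h1 : eakfConj V (fun i => 1 + a * lam i)
        = eakfConj V (fun _ => 1) + eakfConj V (fun i => a * lam i) := by
      rw [eakfConj, eakfConj, eakfConj, hd, Matrix.mul_add, Matrix.add_mul]
    rw [h1, eakf_conj_one V hV1, hconj_smul, ← hspec]
  have hBinv : ((1 : Matrix (Fin M) (Fin M) ℝ) + a • N)⁻¹
      = eakfConj V (fun i => (1 + a * lam i)⁻¹) := by
    apply Matrix.inv_eq_right_inv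
    rw [hplus, eakf_conj_mul V hV2]
    have h1 : (fun i => (1 + a * lam i) * (1 + a * lam i)⁻¹) = fun _ : Fin M => (1:ℝ) := by
      funext i; exact mul_inv_cancel₀ (hb_pos i).ne'
    rw [h1, eakf_conj_one V hV1]
  have hR : (eakfConj V (fun i => (Real.sqrt (1 + a * lam i))⁻¹)).PosSemidef :=
    eakf_conj_posSemidef V (fun i => by positivity)
  have hsq : (eakfConj V (fun i => (Real.sqrt (1 + a * lam i))⁻¹)) ^ 2
      = ((1 : Matrix (Fin M) (Fin M) ℝ) + a • N)⁻¹ := by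
    have hfun : (fun i => (Real.sqrt (1 + a * lam i))⁻¹ * (Real.sqrt (1 + a * lam i))⁻¹)
        = fun i : Fin M => (1 + a * lam i)⁻¹ := by
      funext i
      rw [← mul_inv, Real.mul_self_sqrt (hb_pos i).le]
    rw [pow_two, eakf_conj_mul V hV2, hfun, hBinv]
  have hsqrt_eq : hB.sqrt = eakfConj V (fun i => (Real.sqrt (1 + a * lam i))⁻¹) := by
    have hfin : (spectrum ℝ N).Finite := Matrix.finite_real_spectrum
    have e1 : hB.sqrt = cfc Real.sqrt (((1 : Matrix (Fin M) (Fin M) ℝ) + a • N)⁻¹) := by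
      rw [hB.1.cfc_eq, Matrix.IsHermitian.cfc, Unitary.conjStarAlgAut_apply, Matrix.PosSemidef.sqrt]
    have e2 : ((1 : Matrix (Fin M) (Fin M) ℝ) + a • N)⁻¹ = cfc (fun x => (1 + a * x)⁻¹) N := by
      rw [hH.cfc_eq, Matrix.IsHermitian.cfc, Unitary.conjStarAlgAut_apply, hBinv, eakfConj]
      rfl
    rw [e1, e2, ← cfc_comp' Real.sqrt (fun x => (1 + a * x)⁻¹) N
      Real.continuous_sqrt.continuousOn (hfin.continuousOn _) hH.isSelfAdjoint,
      hH.cfc_eq, Matrix.IsHermitian.cfc, Unitary.conjStarAlgAut_apply, eakfConj]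
    congr 3
    funext i
    simp [Function.comp_def, Real.sqrt_inv, hlamdef]
  -- main computation
  have step1 := (eakfMulRight E).integral_comp_comm hG_int
  rw [show (∫ t in Set.Ioi (0:ℝ),
        ((Real.sqrt t)⁻¹ * Real.exp (-t)) • NormedSpace.exp (-((t * a) • X))) * E
      = eakfMulRight E (∫ t in Set.Ioi (0:ℝ),
        ((Real.sqrt t)⁻¹ * Real.exp (-t)) • NormedSpace.exp (-((t * a) • X))) from rfl,
    ← step1]
  have hpt : ∀ t : ℝ, eakfMulRight E
        (((Real.sqrt t)⁻¹ * Real.exp (-t)) • NormedSpace.exp (-((t * a) • X)))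
      = ∑ i, (((Real.sqrt t)⁻¹ * Real.exp (-t)) * Real.exp (-(t * a * lam i))) •
          (E * (V * Matrix.single i i (1:ℝ) * star V)) := by
    intro t
    rw [eakfMulRight_apply, Matrix.smul_mul, hinter (t * a), hID2 (t * a), hKsum,
      Finset.smul_sum]
    refine Finset.sum_congr rfl fun i _ => ?_
    rw [smul_smul]
  simp only [hpt]
  rw [integral_finset_sum _ (fun i _ => (hs_int i).smul_const _)]
  simp only [integral_smul_const]
  rw [hsqrt_eq, hKsum, Finset.smul_sum]
  refine Finset.sum_congr rfl fun i _ => ?_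
  rw [hs_val i, smul_smul]
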